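/- arXiv:2009.12627 — 3 statements merged into one kernel-verified Lean document; each statement's English description precedes it below -/
import Mathlib

section
/- Let B ⊆ ℝⁿ be open, α ∈ (0,1], and let v₁, …, v_ℓ ∈ SC^α(B) be semiconcave functions with exponent α. If the sum v₁ + ⋯ + v_ℓ is differentiable at a point x₀ ∈ B, then each v_j is differentiable at x₀. -/
open scoped RealInnerProductSpace
open Metric Filter

abbrev En (n : ℕ) := EuclideanSpace ℝ (Fin n)

def SemiconcaveOn {n : ℕ} (A : Set (En n)) (α C : ℝ) (u : En n → ℝ) : Prop :=
  ∀ x ∈ A, ∀ y ∈ A, segment ℝ x y ⊆ A → ∀ t ∈ Set.Icc (0:ℝ) 1,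
    t * u x + (1 - t) * u y - u (t • x + (1 - t) • y) ≤ C * t * (1 - t) * ‖x - y‖ ^ (1 + α)

def reachGrad {n : ℕ} (Ω : Set (En n)) (u : En n → ℝ) (x : En n) : Set (En n) :=
  {p | ∃ xs : ℕ → En n, (∀ k, xs k ∈ Ω ∧ DifferentiableAt ℝ u (xs k)) ∧
    Tendsto xs atTop (nhds x) ∧ Tendsto (fun k => gradient u (xs k)) atTop (nhds p)}

def SClocOn {n : ℕ} (A : Set (En n)) (α : ℝ) (u : En n → ℝ) : Prop :=
  LocallyLipschitzOn A u ∧ ∀ K ⊆ A, IsCompact K → ∃ C, SemiconcaveOn K α C u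

/-- difference quotient along a direction -/
noncomputable def dq {n : ℕ} (x₀ : En n) (u : En n → ℝ) (h : En n) (t : ℝ) : ℝ :=
  (u (x₀ + t • h) - u x₀) / t

lemma dq_mono {n : ℕ} {x₀ : En n} {u : En n → ℝ} {α C r : ℝ} (hC : 0 ≤ C)
    (hsc : ∀ x ∈ closedBall x₀ r, ∀ y ∈ closedBall x₀ r, ∀ t ∈ Set.Icc (0:ℝ) 1,
      t * u x + (1 - t) * u y - u (t • x + (1 - t) • y) ≤ C * t * (1 - t) * ‖x - y‖ ^ (1 + α))
    (h : En n) {t s : ℝ} (ht : 0 < t) (hts : t ≤ s) (hsr : s * ‖h‖ ≤ r) :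
    dq x₀ u h s - C * s ^ α * ‖h‖ ^ (1 + α) ≤ dq x₀ u h t := by
  have hs : 0 < s := lt_of_lt_of_le ht hts
  have hr0 : 0 ≤ r := le_trans (by positivity) hsr
  have hx : x₀ + s • h ∈ closedBall x₀ r := by
    rw [mem_closedBall, dist_self_add_left, norm_smul, Real.norm_eq_abs, abs_of_pos hs]
    exact hsr
  have hy : x₀ ∈ closedBall x₀ r := mem_closedBall_self hr0
  set τ := t / s with hτdef
  have hτ0 : 0 < τ := div_pos ht hs
  have hτ1 : τ ≤ 1 := (div_le_one hs).2 hts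
  have hts' : t = τ * s := by rw [hτdef, div_mul_cancel₀ t hs.ne']
  have key := hsc _ hx _ hy τ ⟨hτ0.le, hτ1⟩
  have hcomb : τ • (x₀ + s • h) + (1 - τ) • x₀ = x₀ + t • h := by
    rw [hts']; module
  rw [hcomb] at key
  have hnorm : ‖x₀ + s • h - x₀‖ = s * ‖h‖ := by
    rw [add_sub_cancel_left, norm_smul, Real.norm_eq_abs, abs_of_pos hs]
  rw [hnorm, Real.mul_rpow hs.le (norm_nonneg _), Real.rpow_add hs 1 α, Real.rpow_one] at key
  rw [hts'] at key
  set N := ‖h‖ ^ (1 + α) with hN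
  have hN0 : 0 ≤ N := Real.rpow_nonneg (norm_nonneg _) _
  have hsα : 0 ≤ s ^ α := Real.rpow_nonneg hs.le _
  rw [dq, dq, hts', le_div_iff₀ (by positivity : (0:ℝ) < τ * s)]
  have expand : ((u (x₀ + s • h) - u x₀) / s - C * s ^ α * N) * (τ * s)
      = τ * (u (x₀ + s • h)) - τ * u x₀ - C * s ^ α * N * τ * s := by
    field_simp
  rw [expand]
  nlinarith [mul_nonneg (mul_nonneg (mul_nonneg (mul_nonneg hC hsα) hN0) (mul_pos hτ0 hτ0).le) hs.le]

lemma tendsto_err {α : ℝ} (hα : 0 < α) (c N : ℝ) :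
    Tendsto (fun t : ℝ => c * t ^ α * N) (nhdsWithin 0 (Set.Ioi 0)) (nhds 0) := by
  have h1 : ContinuousAt (fun t : ℝ => t ^ α) 0 :=
    Real.continuousAt_rpow_const 0 α (Or.inr hα.le)
  have h2 : Tendsto (fun t : ℝ => t ^ α) (nhdsWithin 0 (Set.Ioi 0)) (nhds 0) := by
    have := h1.continuousWithinAt (s := Set.Ioi 0)
    rwa [ContinuousWithinAt, Real.zero_rpow hα.ne'] at this
  have h3 := (h2.const_mul c).mul_const N
  simpa using h3

lemma dq_lim_exists {n : ℕ} {x₀ : En n} {u : En n → ℝ} {α C r : ℝ} (hC : 0 ≤ C)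
    (hα : 0 < α) (hr : 0 < r)
    (hsc : ∀ x ∈ closedBall x₀ r, ∀ y ∈ closedBall x₀ r, ∀ t ∈ Set.Icc (0:ℝ) 1,
      t * u x + (1 - t) * u y - u (t • x + (1 - t) • y) ≤ C * t * (1 - t) * ‖x - y‖ ^ (1 + α))
    {K : NNReal} {ρ : ℝ} (hρ : 0 < ρ) (hlip : LipschitzOnWith K u (ball x₀ ρ))
    (h : En n) :
    ∃ l, Tendsto (dq x₀ u h) (nhdsWithin 0 (Set.Ioi 0)) (nhds l) := by
  rcases eq_or_ne h 0 with rfl | hne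
  · refine ⟨0, ?_⟩
    have : dq x₀ u (0 : En n) = fun _ => 0 := by
      funext t; simp [dq]
    rw [this]; exact tendsto_const_nhds
  · have hn : 0 < ‖h‖ := norm_pos_iff.2 hne
    set N := ‖h‖ ^ (1 + α) with hN
    have hN0 : 0 ≤ N := Real.rpow_nonneg (norm_nonneg _) _
    have hbound : ∀ t : ℝ, 0 < t → t * ‖h‖ < ρ → dq x₀ u h t ≤ K * ‖h‖ := by
      intro t ht htρ
      have hmem : x₀ + t • h ∈ ball x₀ ρ := by
        rw [mem_ball, dist_self_add_left, norm_smul, Real.norm_eq_abs, abs_of_pos ht]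
        exact htρ
      have hmem0 : x₀ ∈ ball x₀ ρ := mem_ball_self hρ
      have hd := hlip.dist_le_mul _ hmem _ hmem0
      rw [dist_self_add_left, norm_smul, Real.norm_eq_abs, abs_of_pos ht] at hd
      rw [dq, div_le_iff₀ ht]
      calc u (x₀ + t • h) - u x₀ ≤ dist (u (x₀ + t • h)) (u x₀) := by
            rw [Real.dist_eq]; exact le_abs_self _
        _ ≤ K * (t * ‖h‖) := hd
        _ = ↑K * ‖h‖ * t := by ring
    have claim : ∀ t s : ℝ, 0 < t → t ≤ s → s * ‖h‖ ≤ r →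
        dq x₀ u h s - C * s ^ α * N ≤ dq x₀ u h t := fun t s ht hts hsr =>
      dq_mono hC hsc h ht hts hsr
    set A := (fun s => dq x₀ u h s - C * s ^ α * N) '' Set.Ioc 0 (r / ‖h‖) with hA
    have hmemr : (r / ‖h‖) ∈ Set.Ioc (0:ℝ) (r / ‖h‖) := ⟨div_pos hr hn, le_refl _⟩
    have hAne : A.Nonempty := ⟨_, ⟨_, hmemr, rfl⟩⟩
    have hsle : ∀ s : ℝ, s ∈ Set.Ioc (0:ℝ) (r / ‖h‖) → s * ‖h‖ ≤ r := by
      intro s hs; exact (le_div_iff₀ hn).1 hs.2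
    have hAbdd : BddAbove A := by
      refine ⟨K * ‖h‖, ?_⟩
      rintro y ⟨s, hs, rfl⟩
      set t := min s (ρ / (2 * ‖h‖)) with htdef
      have ht : 0 < t := lt_min hs.1 (by positivity)
      have hts : t ≤ s := min_le_left _ _
      have htρ : t * ‖h‖ < ρ := by
        have : t ≤ ρ / (2 * ‖h‖) := min_le_right _ _
        have h2 : t * ‖h‖ ≤ ρ / 2 := by
          rw [div_mul_eq_div_div] at this
          calc t * ‖h‖ ≤ ρ / 2 / ‖h‖ * ‖h‖ := by nlinarith
            _ = ρ / 2 := by field_simp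
        linarith
      exact le_trans (claim t s ht hts (hsle s hs)) (hbound t ht htρ)
    set d := sSup A with hd
    refine ⟨d, tendsto_order.2 ⟨?_, ?_⟩⟩
    · intro a ha
      obtain ⟨y, ⟨s₁, hs₁, rfl⟩, hay⟩ := exists_lt_of_lt_csSup hAne ha
      filter_upwards [Ioc_mem_nhdsGT_of_mem (⟨le_refl _, hs₁.1⟩ : (0:ℝ) ∈ Set.Ico 0 s₁)]
        with t ht
      exact lt_of_lt_of_le hay (claim t s₁ ht.1 ht.2 (hsle s₁ hs₁))
    · intro a ha
      have herr := tendsto_err hα C N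
      have hev1 : ∀ᶠ t : ℝ in nhdsWithin 0 (Set.Ioi 0), C * t ^ α * N < a - d :=
        herr.eventually_lt_const (by linarith)
      filter_upwards [hev1,
        Ioc_mem_nhdsGT_of_mem (⟨le_refl _, div_pos hr hn⟩ : (0:ℝ) ∈ Set.Ico 0 (r / ‖h‖))]
        with t hterr ht
      have hmemA : dq x₀ u h t - C * t ^ α * N ∈ A := ⟨t, ht, rfl⟩
      have := le_csSup hAbdd hmemA
      linarith

lemma tendsto_mul_pos_Ioi {c : ℝ} (hc : 0 < c) :
    Tendsto (fun t : ℝ => c * t) (nhdsWithin 0 (Set.Ioi 0)) (nhdsWithin 0 (Set.Ioi 0)) := by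
  rw [tendsto_nhdsWithin_iff]
  constructor
  · have : Tendsto (fun t : ℝ => c * t) (nhds 0) (nhds (c * 0)) :=
      (continuous_const.mul continuous_id).tendsto 0
    simpa using this.mono_left nhdsWithin_le_nhds
  · filter_upwards [self_mem_nhdsWithin] with t ht
    exact mul_pos hc ht

set_option maxHeartbeats 1000000 in
theorem stmt10 {n : ℕ} {B : Set (En n)} (hB : IsOpen B) {α : ℝ} (hα : α ∈ Set.Ioc (0:ℝ) 1)
    {ℓ : ℕ} (v : Fin ℓ → En n → ℝ)
    (hv : ∀ j, LocallyLipschitzOn B (v j) ∧ ∃ C, SemiconcaveOn B α C (v j))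
    (x₀ : En n) (hx₀ : x₀ ∈ B)
    (hsum : DifferentiableAt ℝ (fun x => ∑ j, v j x) x₀) :
    ∀ j, DifferentiableAt ℝ (v j) x₀ := by
  obtain ⟨hα0, hα1⟩ := hα
  -- radius
  obtain ⟨ε, hε, hball⟩ := Metric.isOpen_iff.1 hB x₀ hx₀
  set r := ε / 2 with hrdef
  have hr : 0 < r := by positivity
  have hrB : closedBall x₀ r ⊆ B :=
    (closedBall_subset_ball (by linarith)).trans hball
  -- semiconcavity constants
  have hCex : ∀ j, ∃ C : ℝ, 0 ≤ C ∧ SemiconcaveOn B α C (v j) := by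
    intro j
    obtain ⟨C, hC⟩ := (hv j).2
    refine ⟨max C 0, le_max_right _ _, ?_⟩
    intro x hx y hy hseg t ht
    refine le_trans (hC x hx y hy hseg t ht) ?_
    have h1 : 0 ≤ t * (1 - t) * ‖x - y‖ ^ (1 + α) :=
      mul_nonneg (mul_nonneg ht.1 (by linarith [ht.2])) (Real.rpow_nonneg (norm_nonneg _) _)
    calc C * t * (1 - t) * ‖x - y‖ ^ (1 + α)
        = C * (t * (1 - t) * ‖x - y‖ ^ (1 + α)) := by ring
      _ ≤ max C 0 * (t * (1 - t) * ‖x - y‖ ^ (1 + α)) :=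
          mul_le_mul_of_nonneg_right (le_max_left _ _) h1
      _ = max C 0 * t * (1 - t) * ‖x - y‖ ^ (1 + α) := by ring
  choose Cp hCp0 hscB using hCex
  -- semiconcavity on the closed ball
  have hsc : ∀ j, ∀ x ∈ closedBall x₀ r, ∀ y ∈ closedBall x₀ r, ∀ t ∈ Set.Icc (0:ℝ) 1,
      t * v j x + (1 - t) * v j y - v j (t • x + (1 - t) • y)
        ≤ Cp j * t * (1 - t) * ‖x - y‖ ^ (1 + α) := by
    intro j x hx y hy t ht
    exact hscB j x (hrB hx) y (hrB hy)
      (((convex_closedBall x₀ r).segment_subset hx hy).trans hrB) t ht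
  -- Lipschitz near x₀
  have hlipex : ∀ j, ∃ K : NNReal, ∃ ρ : ℝ, 0 < ρ ∧ LipschitzOnWith K (v j) (ball x₀ ρ) := by
    intro j
    obtain ⟨K, s, hs, hK⟩ := (hv j).1 hx₀
    rw [hB.nhdsWithin_eq hx₀] at hs
    obtain ⟨ρ, hρ, hρs⟩ := Metric.mem_nhds_iff.1 hs
    exact ⟨K, ρ, hρ, hK.mono hρs⟩
  -- directional derivatives exist
  have hex : ∀ j (h : En n), ∃ l, Tendsto (dq x₀ (v j) h) (nhdsWithin 0 (Set.Ioi 0)) (nhds l) := by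
    intro j h
    obtain ⟨K, ρ, hρ, hK⟩ := hlipex j
    exact dq_lim_exists (hCp0 j) hα0 hr (hsc j) hρ hK h
  choose d hd using hex
  -- upper bound
  have hupper : ∀ j (h : En n), ‖h‖ ≤ r →
      v j (x₀ + h) - v j x₀ ≤ d j h + Cp j * ‖h‖ ^ (1 + α) := by
    intro j h hhr
    have hev : ∀ᶠ t : ℝ in nhdsWithin 0 (Set.Ioi 0),
        v j (x₀ + h) - v j x₀ - Cp j * ‖h‖ ^ (1 + α) ≤ dq x₀ (v j) h t := by
      filter_upwards [Ioc_mem_nhdsGT_of_mem (⟨le_refl _, one_pos⟩ : (0:ℝ) ∈ Set.Ico 0 1)]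
        with t ht
      have := dq_mono (hCp0 j) (hsc j) h ht.1 ht.2 (by simpa using hhr)
      rw [Real.one_rpow] at this
      simpa [dq] using this
    have := ge_of_tendsto (hd j h) hev
    linarith
  -- superadditivity
  have hsuper : ∀ j (h₁ h₂ : En n), d j h₁ + d j h₂ ≤ d j (h₁ + h₂) := by
    intro j h₁ h₂
    set M := ‖h₁ - h₂‖ ^ (1 + α) with hM
    have hM0 : 0 ≤ M := Real.rpow_nonneg (norm_nonneg _) _
    have hhalf : Tendsto (fun t : ℝ => (1/2 : ℝ) * t)
        (nhdsWithin 0 (Set.Ioi 0)) (nhdsWithin 0 (Set.Ioi 0)) := tendsto_mul_pos_Ioi one_half_pos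
    have hL : Tendsto (fun t : ℝ => dq x₀ (v j) (h₁ + h₂) ((1/2) * t))
        (nhdsWithin 0 (Set.Ioi 0)) (nhds (d j (h₁ + h₂))) := (hd j (h₁ + h₂)).comp hhalf
    have hR : Tendsto (fun t : ℝ => dq x₀ (v j) h₁ t + dq x₀ (v j) h₂ t - (Cp j / 2) * t ^ α * M)
        (nhdsWithin 0 (Set.Ioi 0)) (nhds (d j h₁ + d j h₂ - 0)) :=
      ((hd j h₁).add (hd j h₂)).sub (tendsto_err hα0 (Cp j / 2) M)
    have hptwise : ∀ᶠ t : ℝ in nhdsWithin 0 (Set.Ioi 0),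
        dq x₀ (v j) h₁ t + dq x₀ (v j) h₂ t - (Cp j / 2) * t ^ α * M
          ≤ dq x₀ (v j) (h₁ + h₂) ((1/2) * t) := by
      set D := 1 + ‖h₁‖ + ‖h₂‖ with hD
      have hD0 : 0 < D := by positivity
      filter_upwards [Ioc_mem_nhdsGT_of_mem
        (⟨le_refl _, div_pos hr hD0⟩ : (0:ℝ) ∈ Set.Ico 0 (r / D))] with t ht
      have ht0 : 0 < t := ht.1
      have htD : t * D ≤ r := (le_div_iff₀ hD0).1 ht.2
      have hmem1 : x₀ + t • h₁ ∈ closedBall x₀ r := by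
        rw [mem_closedBall, dist_self_add_left, norm_smul, Real.norm_eq_abs, abs_of_pos ht0]
        nlinarith [norm_nonneg h₂, norm_nonneg h₁]
      have hmem2 : x₀ + t • h₂ ∈ closedBall x₀ r := by
        rw [mem_closedBall, dist_self_add_left, norm_smul, Real.norm_eq_abs, abs_of_pos ht0]
        nlinarith [norm_nonneg h₂, norm_nonneg h₁]
      have key := hsc j _ hmem1 _ hmem2 (1/2) ⟨by norm_num, by norm_num⟩
      have hmid : (1/2 : ℝ) • (x₀ + t • h₁) + (1 - 1/2 : ℝ) • (x₀ + t • h₂)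
          = x₀ + ((1/2) * t) • (h₁ + h₂) := by
        norm_num; module
      have hdiff : x₀ + t • h₁ - (x₀ + t • h₂) = t • (h₁ - h₂) := by module
      rw [hmid, hdiff, norm_smul, Real.norm_eq_abs, abs_of_pos ht0,
        Real.mul_rpow ht0.le (norm_nonneg _), Real.rpow_add ht0 1 α, Real.rpow_one] at key
      have htα : 0 ≤ t ^ α := Real.rpow_nonneg ht0.le _
      rw [dq, dq, dq, le_div_iff₀ (by positivity : (0:ℝ) < (1/2) * t)]
      have expand : ((v j (x₀ + t • h₁) - v j x₀) / t + (v j (x₀ + t • h₂) - v j x₀) / t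
            - Cp j / 2 * t ^ α * M) * (1/2 * t)
          = (1/2) * (v j (x₀ + t • h₁)) + (1/2) * (v j (x₀ + t • h₂)) - v j x₀
            - Cp j / 4 * (t * t ^ α * M) := by
        field_simp; ring
      rw [expand]
      nlinarith [key]
    exact le_of_tendsto_of_tendsto (by simpa using hR) hL hptwise
  -- the sum and its derivative
  set S := fun x => ∑ j, v j x with hS
  set q := fderiv ℝ S x₀ with hq
  have hSder : HasFDerivAt S q x₀ := hsum.hasFDerivAt
  have hqdir : ∀ h : En n, Tendsto (dq x₀ S h) (nhdsWithin 0 (Set.Ioi 0)) (nhds (q h)) := by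
    intro h
    have hcur : HasDerivAt (fun t : ℝ => x₀ + t • h) h 0 := by
      have h1 := ((hasDerivAt_id (0:ℝ)).smul_const h).const_add x₀
      simpa using h1
    have hc0 : x₀ + (0:ℝ) • h = x₀ := by simp
    have hcomp : HasDerivAt (S ∘ fun t : ℝ => x₀ + t • h) (q h) 0 :=
      HasFDerivAt.comp_hasDerivAt 0 (by rwa [hc0]) hcur
    have hslope := hasDerivAt_iff_tendsto_slope.1 hcomp
    have hmono : nhdsWithin (0:ℝ) (Set.Ioi 0) ≤ nhdsWithin 0 {(0:ℝ)}ᶜ :=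
      nhdsWithin_mono _ (fun x hx => ne_of_gt hx)
    refine (hslope.mono_left hmono).congr (fun t => ?_)
    simp [slope, dq, Function.comp, hc0, div_eq_inv_mul]
  have hsum_d : ∀ h : En n, ∑ j, d j h = q h := by
    intro h
    have h1 : Tendsto (fun t => ∑ j, dq x₀ (v j) h t)
        (nhdsWithin 0 (Set.Ioi 0)) (nhds (∑ j, d j h)) :=
      tendsto_finset_sum _ (fun j _ => hd j h)
    have h2 : (fun t => ∑ j, dq x₀ (v j) h t) = dq x₀ S h := by
      funext t; simp [dq, hS, ← Finset.sum_div, Finset.sum_sub_distrib]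
    rw [h2] at h1
    exact tendsto_nhds_unique h1 (hqdir h)
  -- additivity of each d j
  have hadd : ∀ j (h₁ h₂ : En n), d j (h₁ + h₂) = d j h₁ + d j h₂ := by
    intro j h₁ h₂
    set g := fun i => d i (h₁ + h₂) - d i h₁ - d i h₂ with hg
    have hg0 : ∀ i ∈ Finset.univ, 0 ≤ g i := by
      intro i _
      have := hsuper i h₁ h₂
      simp only [hg]; linarith
    have hgsum : ∑ i, g i = 0 := by
      simp only [hg, Finset.sum_sub_distrib, hsum_d]
      rw [map_add]; ring
    have := (Finset.sum_eq_zero_iff_of_nonneg hg0).1 hgsum j (Finset.mem_univ j)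
    simp only [hg] at this
    linarith
  have hzero : ∀ j, d j 0 = 0 := by
    intro j
    have := hadd j 0 0
    simp at this
    linarith
  -- homogeneity
  have hsmul : ∀ j (c : ℝ) (h : En n), d j (c • h) = c * d j h := by
    have hpos : ∀ j (c : ℝ), 0 < c → ∀ h : En n, d j (c • h) = c * d j h := by
      intro j c hc h
      have hcomp : Tendsto (fun t : ℝ => c * dq x₀ (v j) h (c * t))
          (nhdsWithin 0 (Set.Ioi 0)) (nhds (c * d j h)) :=
        ((hd j h).comp (tendsto_mul_pos_Ioi hc)).const_mul c
      have heq : (fun t : ℝ => c * dq x₀ (v j) h (c * t)) = dq x₀ (v j) (c • h) := by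
        funext t
        rcases eq_or_ne t 0 with rfl | ht
        · simp [dq]
        · rw [dq, dq, smul_smul, mul_comm c t]
          field_simp
      rw [heq] at hcomp
      exact tendsto_nhds_unique (hd j (c • h)) hcomp
    intro j c h
    rcases lt_trichotomy c 0 with hc | rfl | hc
    · have hkey : d j (c • h) + d j ((-c) • h) = 0 := by
        rw [← hadd j]
        have : c • h + (-c) • h = 0 := by module
        rw [this, hzero j]
      have h2 := hpos j (-c) (by linarith) h
      rw [h2] at hkey
      linarith
    · simp [hzero j]
    · exact hpos j c hc h
  -- build the linear map
  intro j
  have hlin : IsLinearMap ℝ (d j) :=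
    ⟨hadd j, fun c h => by rw [smul_eq_mul]; exact hsmul j c h⟩
  set Dc : En n →L[ℝ] ℝ := LinearMap.toContinuousLinearMap (IsLinearMap.mk' (d j) hlin)
    with hDc
  have hDcval : ∀ h, Dc h = d j h := fun h => rfl
  -- sum of constants
  set Ctot := ∑ i, Cp i with hCtot
  have hCtot0 : 0 ≤ Ctot := Finset.sum_nonneg (fun i _ => hCp0 i)
  have hCple : ∀ i, Cp i ≤ Ctot :=
    fun i => Finset.single_le_sum (fun i _ => hCp0 i) (Finset.mem_univ i)
  have hCperase : ∑ i ∈ Finset.univ.erase j, Cp i ≤ Ctot := by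
    rw [hCtot]
    exact Finset.sum_le_sum_of_subset_of_nonneg (Finset.erase_subset _ _)
      (fun i _ _ => hCp0 i)
  -- rpow split
  have hsplit : ∀ s : ℝ, 0 ≤ s → s ^ (1 + α) = s ^ α * s := by
    intro s hs
    rcases eq_or_lt_of_le hs with rfl | hs'
    · rw [Real.zero_rpow (by positivity), Real.zero_rpow (ne_of_gt hα0), zero_mul]
    · rw [Real.rpow_add hs' 1 α, Real.rpow_one]; ring
  -- final: differentiability
  refine HasFDerivAt.differentiableAt (f' := Dc) ?_
  rw [hasFDerivAt_iff_isLittleO_nhds_zero, Asymptotics.isLittleO_iff]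
  intro c hc
  have hSlittle := (hasFDerivAt_iff_isLittleO_nhds_zero.1 hSder).def (half_pos hc)
  have hnorm_ev : ∀ᶠ h : En n in nhds 0, ‖h‖ ≤ r ∧ Ctot * ‖h‖ ^ α ≤ c / 2 := by
    have hcont : Tendsto (fun h : En n => Ctot * ‖h‖ ^ α) (nhds 0) (nhds 0) := by
      have h1 : ContinuousAt (fun t : ℝ => t ^ α) 0 :=
        Real.continuousAt_rpow_const 0 α (Or.inr hα0.le)
      have h0 : Tendsto (fun h : En n => ‖h‖) (nhds 0) (nhds 0) := by
        simpa using continuous_norm.tendsto (0 : En n)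
      have h2 : Tendsto (fun h : En n => ‖h‖ ^ α) (nhds 0) (nhds 0) := by
        have := h1.tendsto.comp h0
        simpa [Function.comp_def, Real.zero_rpow (ne_of_gt hα0)] using this
      simpa using h2.const_mul Ctot
    have hev1 : ∀ᶠ h : En n in nhds 0, Ctot * ‖h‖ ^ α ≤ c / 2 :=
      (hcont.eventually_lt_const (by linarith)).mono (fun h hh => hh.le)
    have hev2 : ∀ᶠ h : En n in nhds 0, ‖h‖ ≤ r := by
      filter_upwards [Metric.closedBall_mem_nhds (0 : En n) hr] with h hh
      simpa [dist_zero_right] using hh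
    exact hev2.and hev1 |>.mono (fun h hh => ⟨hh.1, hh.2⟩)
  filter_upwards [hSlittle, hnorm_ev] with h hSh ⟨hhr, hhc⟩
  -- main estimate
  have hkey : ∀ i, v i (x₀ + h) - v i x₀ - d i h ≤ Cp i * ‖h‖ ^ (1 + α) := by
    intro i
    have := hupper i h hhr
    linarith
  have hsum_id : ∑ i, (v i (x₀ + h) - v i x₀ - d i h) = S (x₀ + h) - S x₀ - q h := by
    rw [← hsum_d h]
    simp only [hS, Finset.sum_sub_distrib]
  have herase : (v j (x₀ + h) - v j x₀ - d j h)
      = (S (x₀ + h) - S x₀ - q h) - ∑ i ∈ Finset.univ.erase j, (v i (x₀ + h) - v i x₀ - d i h) := by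
    rw [← hsum_id, ← Finset.sum_erase_add Finset.univ _ (Finset.mem_univ j)]
    ring
  have hT : |S (x₀ + h) - S x₀ - q h| ≤ (c / 2) * ‖h‖ := by
    have := hSh
    rwa [Real.norm_eq_abs] at this
  have heraseub : ∑ i ∈ Finset.univ.erase j, (v i (x₀ + h) - v i x₀ - d i h)
      ≤ Ctot * ‖h‖ ^ (1 + α) := by
    calc ∑ i ∈ Finset.univ.erase j, (v i (x₀ + h) - v i x₀ - d i h)
        ≤ ∑ i ∈ Finset.univ.erase j, Cp i * ‖h‖ ^ (1 + α) :=
          Finset.sum_le_sum (fun i _ => hkey i)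
      _ = (∑ i ∈ Finset.univ.erase j, Cp i) * ‖h‖ ^ (1 + α) := by
          rw [Finset.sum_mul]
      _ ≤ Ctot * ‖h‖ ^ (1 + α) :=
          mul_le_mul_of_nonneg_right hCperase (Real.rpow_nonneg (norm_nonneg _) _)
  have hpow : Ctot * ‖h‖ ^ (1 + α) ≤ (c / 2) * ‖h‖ := by
    rw [hsplit ‖h‖ (norm_nonneg _)]
    calc Ctot * (‖h‖ ^ α * ‖h‖) = (Ctot * ‖h‖ ^ α) * ‖h‖ := by ring
      _ ≤ (c / 2) * ‖h‖ := mul_le_mul_of_nonneg_right hhc (norm_nonneg _)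
  have hub : v j (x₀ + h) - v j x₀ - d j h ≤ c * ‖h‖ := by
    have h1 := hkey j
    have h2 : Cp j * ‖h‖ ^ (1 + α) ≤ Ctot * ‖h‖ ^ (1 + α) :=
      mul_le_mul_of_nonneg_right (hCple j) (Real.rpow_nonneg (norm_nonneg _) _)
    have h3 : (0:ℝ) ≤ (c/2) * ‖h‖ := by positivity
    linarith
  have hlb : -(c * ‖h‖) ≤ v j (x₀ + h) - v j x₀ - d j h := by
    rw [herase]
    have h1 : -((c/2) * ‖h‖) ≤ S (x₀ + h) - S x₀ - q h := by
      have := abs_le.1 hT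
      linarith [this.1]
    linarith
  rw [Real.norm_eq_abs, hDcval h, abs_le]
  exact ⟨by linarith, by linarith⟩
end

section
/- Let u(x) = −|x| on the closure of Ω = {x ∈ ℝ² : x₁ > 0, |x| < 1}, and define for x ∈ B_1(0) the function E(x) = −|x| if x₁ ≥ 0 and E(x) = −|x₂| + x₁² if x₁ < 0. Then E is the infimum extension inf over y ∈ closure(Ω), p ∈ D*u(y) of [u(y) + ⟨p, x−y⟩ + |x−y|²]; in particular E ∈ SC¹(B_1(0)), E = u on closure(Ω) ∩ B_1(0), and E is not concave on B_1(0). -/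
open scoped RealInnerProductSpace
open Metric Filter

-- coordinate helpers
lemma inner2 (a b : En 2) : ⟪a, b⟫ = a 0 * b 0 + a 1 * b 1 := by
  simp [PiLp.inner_apply, RCLike.inner_apply, Fin.sum_univ_two]; ring

lemma normsq2 (a : En 2) : ‖a‖ ^ 2 = (a 0) ^ 2 + (a 1) ^ 2 := by
  rw [← real_inner_self_eq_norm_sq, inner2]; ring

lemma abs_coord_le (a : En 2) (i : Fin 2) : |a i| ≤ ‖a‖ := by
  have h : |a i| ^ 2 ≤ ‖a‖ ^ 2 := by
    rw [normsq2, sq_abs]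
    fin_cases i
    · exact le_add_of_nonneg_right (sq_nonneg (a 1))
    · exact le_add_of_nonneg_left (sq_nonneg (a 0))
  have := abs_nonneg (a i); have := norm_nonneg a
  nlinarith

lemma combo_sq {F : Type*} [NormedAddCommGroup F] [InnerProductSpace ℝ F]
    (a b : F) (t : ℝ) :
    t * ‖a‖ ^ 2 + (1 - t) * ‖b‖ ^ 2 - ‖t • a + (1 - t) • b‖ ^ 2
      = t * (1 - t) * ‖a - b‖ ^ 2 := by
  simp only [← real_inner_self_eq_norm_sq, inner_add_add_self, inner_sub_sub_self,
    real_inner_smul_left, real_inner_smul_right, real_inner_comm a b]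
  ring
variable {F : Type*} [NormedAddCommGroup F] [InnerProductSpace ℝ F] [CompleteSpace F]

theorem hasGradientAt_neg_norm {z : F} (hz : z ≠ 0) :
    HasGradientAt (fun x => -‖x‖) (-(‖z‖⁻¹ • z)) z := by
  have hz' : ‖z‖ ≠ 0 := norm_ne_zero_iff.mpr hz
  have h1 : HasFDerivAt (fun x : F => ‖x‖^2) (2 • (innerSL ℝ z)) z :=
    (hasStrictFDerivAt_norm_sq z).hasFDerivAt
  have h2 : HasDerivAt (Real.sqrt ·) (1/(2*Real.sqrt (‖z‖^2))) (‖z‖^2) :=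
    Real.hasDerivAt_sqrt (by positivity)
  have h3 := h2.comp_hasFDerivAt z h1
  have h4 : HasFDerivAt (fun x : F => ‖x‖) (innerSL ℝ (‖z‖⁻¹ • z)) z := by
    have he : (fun x : F => Real.sqrt (‖x‖^2)) = fun x : F => ‖x‖ := by
      funext x; rw [Real.sqrt_sq (norm_nonneg x)]
    have he2 : ((1/(2*Real.sqrt (‖z‖^2))) • (2 • (innerSL ℝ z)) : F →L[ℝ] ℝ)
        = innerSL ℝ (‖z‖⁻¹ • z) := by
      ext w
      simp only [ContinuousLinearMap.smul_apply, innerSL_apply_apply, real_inner_smul_left,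
        Real.sqrt_sq (norm_nonneg z), smul_eq_mul]
      field_simp
      ring
    rw [← he, ← he2]
    exact h3
  rw [hasGradientAt_iff_hasFDerivAt]
  refine h4.neg.congr_fderiv ?_
  ext w
  simp [InnerProductSpace.toDual_apply_apply]

noncomputable def Om2 : Set (En 2) := {x | 0 < x 0 ∧ ‖x‖ < 1}
noncomputable def U2 : En 2 → ℝ := fun x => -‖x‖

lemma U2_grad {z : En 2} (hz : z ≠ 0) : gradient U2 z = -(‖z‖⁻¹ • z) :=
  (hasGradientAt_neg_norm hz).gradient

lemma U2_diff {z : En 2} (hz : z ≠ 0) : DifferentiableAt ℝ U2 z :=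
  (hasGradientAt_neg_norm hz).differentiableAt

lemma Om2_ne_zero {z : En 2} (hz : z ∈ Om2) : z ≠ 0 := by
  intro h
  have := hz.1
  rw [h] at this
  simp at this

lemma gradcont {y : En 2} (hy : y ≠ 0) :
    ContinuousAt (fun z : En 2 => -(‖z‖⁻¹ • z)) y := by
  have h1 : ContinuousAt (fun z : En 2 => ‖z‖⁻¹) y :=
    (continuousAt_id.norm).inv₀ (norm_ne_zero_iff.mpr hy)
  exact (h1.smul continuousAt_id).neg

/-- key: along points of Om2, gradient of U2 agrees with the continuous map. -/
lemma tendsto_grad {y : En 2} (hy : y ≠ 0) {xs : ℕ → En 2}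
    (hmem : ∀ k, xs k ∈ Om2) (hxs : Tendsto xs atTop (nhds y)) :
    Tendsto (fun k => gradient U2 (xs k)) atTop (nhds (-(‖y‖⁻¹ • y))) := by
  have : (fun k => gradient U2 (xs k)) = fun k => -(‖xs k‖⁻¹ • xs k) := by
    funext k; exact U2_grad (Om2_ne_zero (hmem k))
  rw [this]
  exact ((gradcont hy).tendsto).comp hxs

lemma reach_ne_zero {y : En 2} (hy : y ≠ 0) {p : En 2}
    (hp : p ∈ reachGrad Om2 U2 y) : p = -(‖y‖⁻¹ • y) := by
  obtain ⟨xs, h1, hxs, hg⟩ := hp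
  exact tendsto_nhds_unique hg (tendsto_grad hy (fun k => (h1 k).1) hxs)

lemma reach_zero {p : En 2} (hp : p ∈ reachGrad Om2 U2 0) :
    ‖p‖ = 1 ∧ p 0 ≤ 0 := by
  obtain ⟨xs, h1, hxs, hg⟩ := hp
  have hne : ∀ k, xs k ≠ 0 := fun k => Om2_ne_zero (h1 k).1
  have hgr : ∀ k, gradient U2 (xs k) = -(‖xs k‖⁻¹ • xs k) := fun k => U2_grad (hne k)
  constructor
  · have h2 : Tendsto (fun k => ‖gradient U2 (xs k)‖) atTop (nhds ‖p‖) := hg.norm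
    have h3 : (fun k => ‖gradient U2 (xs k)‖) = fun _ => 1 := by
      funext k
      rw [hgr k, norm_neg, norm_smul, norm_inv, norm_norm,
        inv_mul_cancel₀ (norm_ne_zero_iff.mpr (hne k))]
    rw [h3] at h2
    exact tendsto_nhds_unique h2 tendsto_const_nhds
  · have h2 : Tendsto (fun k => (gradient U2 (xs k)) 0) atTop (nhds (p 0)) :=
      ((PiLp.proj (𝕜 := ℝ) 2 (fun _ : Fin 2 => ℝ) 0).continuous.tendsto p).comp hg
    refine le_of_tendsto h2 (Eventually.of_forall fun k => ?_)
    rw [hgr k]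
    have h4 : 0 < (xs k) 0 := (h1 k).1.1
    have h5 : (0:ℝ) ≤ ‖xs k‖⁻¹ := inv_nonneg.mpr (norm_nonneg _)
    have : (-(‖xs k‖⁻¹ • xs k)) 0 = -(‖xs k‖⁻¹ * (xs k) 0) := by
      simp [PiLp.neg_apply, PiLp.smul_apply]
    rw [this]
    nlinarith

noncomputable def e0 : En 2 := EuclideanSpace.single 0 (1:ℝ)

lemma e0_norm : ‖e0‖ = 1 := by simp [e0, EuclideanSpace.norm_single]

lemma tendsto_aux (ε : ℝ) : Tendsto (fun k : ℕ => ε * (1/(k+1))) atTop (nhds 0) := by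
  have := tendsto_one_div_add_atTop_nhds_zero_nat.const_mul ε
  simpa using this

lemma mem_reach {y : En 2} (h0 : 0 ≤ y 0) (h1 : ‖y‖ < 1) (hy : y ≠ 0) :
    -(‖y‖⁻¹ • y) ∈ reachGrad Om2 U2 y ∧ y ∈ closure Om2 := by
  set ε := (1 - ‖y‖)/2 with hε
  have hεpos : 0 < ε := by rw [hε]; linarith
  set xs : ℕ → En 2 := fun k => y + (ε * (1/(k+1))) • e0 with hxs
  have hkpos : ∀ k : ℕ, (0:ℝ) < 1/(k+1) := by
    intro k; positivity
  have hkle : ∀ k : ℕ, (1:ℝ)/(k+1) ≤ 1 := by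
    intro k
    rw [div_le_one (by positivity)]
    exact le_add_of_nonneg_left (Nat.cast_nonneg k)
  have hmem : ∀ k, xs k ∈ Om2 := by
    intro k
    constructor
    · have : (xs k) 0 = y 0 + (ε * (1/(k+1))) * 1 := by
        simp [hxs, PiLp.add_apply, PiLp.smul_apply, e0, EuclideanSpace.single_apply]
      rw [this]
      have := hkpos k
      nlinarith
    · have hb : ‖xs k‖ ≤ ‖y‖ + ε * (1/(k+1)) := by
        calc ‖xs k‖ ≤ ‖y‖ + ‖(ε * (1/(k+1))) • e0‖ := norm_add_le _ _
        _ = ‖y‖ + ε * (1/(k+1)) := by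
            rw [norm_smul, e0_norm, mul_one, Real.norm_eq_abs,
              abs_of_pos (by nlinarith [hkpos k])]
      have : ε * (1/(k+1)) ≤ ε := by nlinarith [hkpos k, hkle k]
      have : ‖xs k‖ ≤ ‖y‖ + ε := by linarith
      rw [hε] at this
      linarith
  have htend : Tendsto xs atTop (nhds y) := by
    have h2 : Tendsto (fun k : ℕ => (ε * (1/(k+1))) • e0) atTop (nhds ((0:ℝ) • e0)) :=
      (tendsto_aux ε).smul_const e0
    rw [zero_smul] at h2
    have h3 : Tendsto (fun _ : ℕ => y) atTop (nhds y) := tendsto_const_nhds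
    have h4 := h3.add h2
    rw [hxs]
    simpa [one_div] using h4
  refine ⟨⟨xs, fun k => ⟨hmem k, U2_diff (Om2_ne_zero (hmem k))⟩, htend, ?_⟩,
    mem_closure_of_tendsto htend (Eventually.of_forall hmem)⟩
  exact tendsto_grad hy hmem htend

lemma mem_reach_zero :
    -e0 ∈ reachGrad Om2 U2 0 ∧ (0 : En 2) ∈ closure Om2 := by
  set xs : ℕ → En 2 := fun k => ((1:ℝ)/(2*(k+1))) • e0 with hxs
  have hkpos : ∀ k : ℕ, (0:ℝ) < 1/(2*(k+1)) := by intro k; positivity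
  have hnorm : ∀ k, ‖xs k‖ = 1/(2*(k+1)) := by
    intro k
    rw [hxs]
    rw [norm_smul, e0_norm, mul_one, Real.norm_eq_abs, abs_of_pos (hkpos k)]
  have hmem : ∀ k, xs k ∈ Om2 := by
    intro k
    constructor
    · have : (xs k) 0 = 1/(2*(k+1)) := by
        simp [hxs, PiLp.smul_apply, e0, EuclideanSpace.single_apply]
      rw [this]; exact hkpos k
    · rw [hnorm k]
      have : (1:ℝ) ≤ 2*(k+1) := by
        have : (0:ℝ) ≤ (k:ℝ) := Nat.cast_nonneg k
        nlinarith
      rw [div_lt_one (by positivity)]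
      linarith
  have htend : Tendsto xs atTop (nhds 0) := by
    have h0 : Tendsto (fun k : ℕ => (1:ℝ)/(2*(k+1))) atTop (nhds 0) := by
      have := (tendsto_aux (1/2))
      convert this using 2 with k
      field_simp
    have := h0.smul_const e0
    rw [zero_smul] at this
    exact this
  have hgr : ∀ k, gradient U2 (xs k) = -e0 := by
    intro k
    have hne : xs k ≠ 0 := Om2_ne_zero (hmem k)
    rw [U2_grad hne, hnorm k, hxs]
    rw [smul_smul, inv_mul_cancel₀ (ne_of_gt (hkpos k)), one_smul]
  refine ⟨⟨xs, fun k => ⟨hmem k, U2_diff (Om2_ne_zero (hmem k))⟩, htend, ?_⟩,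
    mem_closure_of_tendsto htend (Eventually.of_forall hmem)⟩
  have : (fun k => gradient U2 (xs k)) = fun _ => -e0 := funext hgr
  rw [this]
  exact tendsto_const_nhds

lemma closure_sub {y : En 2} (hy : y ∈ closure Om2) : 0 ≤ y 0 := by
  have hcl : IsClosed {z : En 2 | 0 ≤ z 0} :=
    isClosed_le continuous_const (PiLp.proj (𝕜 := ℝ) 2 (fun _ : Fin 2 => ℝ) 0).continuous
  exact closure_minimal (fun z hz => le_of_lt hz.1) hcl hy

noncomputable def Ef (x : En 2) : ℝ := if 0 ≤ x 0 then -‖x‖ else -|x 1| + (x 0)^2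

noncomputable def Sset (x : En 2) : Set ℝ :=
  {v | ∃ y ∈ closure Om2, ∃ p ∈ reachGrad Om2 U2 y,
    v = U2 y + ⟪p, x - y⟫ + ‖x - y‖ ^ 2}

lemma lowbd (x : En 2) : ∀ v ∈ Sset x, Ef x ≤ v := by
  rintro v ⟨y, hy, p, hp, rfl⟩
  by_cases hy0 : y = 0
  · subst hy0
    obtain ⟨hpn, hp0⟩ := reach_zero hp
    have hU : U2 (0 : En 2) = 0 := by simp [U2]
    rw [hU, sub_zero, zero_add]
    by_cases hx0 : 0 ≤ x 0
    · rw [Ef, if_pos hx0]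
      have h1 : |⟪p, x⟫| ≤ ‖p‖ * ‖x‖ := abs_real_inner_le_norm p x
      rw [hpn, one_mul] at h1
      have h2 := (abs_le.mp h1).1
      nlinarith [sq_nonneg ‖x‖]
    · rw [Ef, if_neg hx0]
      push_neg at hx0
      rw [inner2, normsq2]
      have hp1 : |p 1| ≤ 1 := by
        have := abs_coord_le p 1
        rw [hpn] at this
        exact this
      have h1 : |p 1 * x 1| ≤ |x 1| := by
        rw [abs_mul]
        exact mul_le_of_le_one_left (abs_nonneg _) hp1
      have h2 := (abs_le.mp h1).1
      have h3 : 0 ≤ p 0 * x 0 := by nlinarith [mul_nonneg (neg_nonneg.mpr hp0) (neg_nonneg.mpr hx0.le)]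
      nlinarith [sq_nonneg (x 1)]
  · have hpe := reach_ne_zero hy0 hp
    subst hpe
    have hyn : (0:ℝ) < ‖y‖ := norm_pos_iff.mpr hy0
    have hU : U2 y = -‖y‖ := rfl
    have hin : ⟪-(‖y‖⁻¹ • y), x - y⟫ = -(‖y‖⁻¹ * ⟪y, x⟫) + ‖y‖ := by
      rw [inner_neg_left, real_inner_smul_left, inner_sub_right,
        real_inner_self_eq_norm_sq]
      field_simp
      ring
    rw [hU, hin]
    by_cases hx0 : 0 ≤ x 0
    · rw [Ef, if_pos hx0]
      have h1 : ⟪y, x⟫ ≤ ‖y‖ * ‖x‖ := real_inner_le_norm y x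
      have h2 : ‖y‖⁻¹ * ⟪y, x⟫ ≤ ‖x‖ := by
        calc ‖y‖⁻¹ * ⟪y, x⟫ ≤ ‖y‖⁻¹ * (‖y‖ * ‖x‖) := by
              apply mul_le_mul_of_nonneg_left (real_inner_le_norm y x)
              positivity
        _ = ‖x‖ := by field_simp
      nlinarith [sq_nonneg ‖x - y‖]
    · rw [Ef, if_neg hx0]
      push_neg at hx0
      have hy0' : 0 ≤ y 0 := closure_sub hy
      have hI : ⟪y, x⟫ ≤ ‖y‖ * |x 1| := by
        rw [inner2]
        have h1 : y 1 * x 1 ≤ |y 1| * |x 1| := by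
          rw [← abs_mul]; exact le_abs_self _
        have h2 : |y 1| * |x 1| ≤ ‖y‖ * |x 1| :=
          mul_le_mul_of_nonneg_right (abs_coord_le y 1) (abs_nonneg _)
        have h3 : y 0 * x 0 ≤ 0 := mul_nonpos_of_nonneg_of_nonpos hy0' hx0.le
        linarith
      have h2 : ‖y‖⁻¹ * ⟪y, x⟫ ≤ |x 1| := by
        calc ‖y‖⁻¹ * ⟪y, x⟫ ≤ ‖y‖⁻¹ * (‖y‖ * |x 1|) := by
              apply mul_le_mul_of_nonneg_left hI
              positivity
        _ = |x 1| := by field_simp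
      have h3 : (x 0)^2 ≤ ‖x - y‖^2 := by
        rw [normsq2]
        have e1 : (x - y) 0 = x 0 - y 0 := rfl
        have e2 : (x - y) 1 = x 1 - y 1 := rfl
        rw [e1, e2]
        nlinarith [sq_nonneg (x 1 - y 1)]
      linarith

lemma val_single (x : En 2) (c : ℝ) :
    U2 (EuclideanSpace.single 1 c) +
      ⟪-(‖(EuclideanSpace.single 1 c : En 2)‖⁻¹ • (EuclideanSpace.single 1 c : En 2)),
        x - EuclideanSpace.single 1 c⟫ +
      ‖x - EuclideanSpace.single 1 c‖ ^ 2
    = -|c| - |c|⁻¹ * c * (x 1 - c) + ((x 0) ^ 2 + (x 1 - c) ^ 2) := by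
  set y : En 2 := EuclideanSpace.single 1 c with hy
  have hy0 : y 0 = 0 := by simp [hy, EuclideanSpace.single_apply]
  have hy1 : y 1 = c := by simp [hy, EuclideanSpace.single_apply]
  have hn : ‖y‖ = |c| := by
    rw [hy, EuclideanSpace.norm_single, Real.norm_eq_abs]
  have hU : U2 y = -|c| := by show -‖y‖ = -|c|; rw [hn]
  rw [hU, inner2, normsq2]
  have e1 : (x - y) 0 = x 0 - y 0 := rfl
  have e2 : (x - y) 1 = x 1 - y 1 := rfl
  have e3 : (-(‖y‖⁻¹ • y)) 0 = -(‖y‖⁻¹ * y 0) := rfl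
  have e4 : (-(‖y‖⁻¹ • y)) 1 = -(‖y‖⁻¹ * y 1) := rfl
  rw [e1, e2, e3, e4, hy0, hy1, hn]
  ring

lemma Sset_nonempty (x : En 2) : (Sset x).Nonempty :=
  ⟨U2 0 + ⟪-e0, x - 0⟫ + ‖x - 0‖ ^ 2,
    0, mem_reach_zero.2, -e0, mem_reach_zero.1, rfl⟩

lemma main_sInf (x : En 2) (hx : ‖x‖ < 1) : Ef x = sInf (Sset x) := by
  refine (csInf_eq_of_forall_ge_of_forall_gt_exists_lt (Sset_nonempty x)
    (lowbd x) ?_).symm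
  intro w hw
  by_cases hx0 : 0 ≤ x 0
  · by_cases hxz : x = 0
    · subst hxz
      refine ⟨U2 0 + ⟪-e0, (0:En 2) - 0⟫ + ‖(0:En 2) - 0‖ ^ 2,
        ⟨0, mem_reach_zero.2, -e0, mem_reach_zero.1, rfl⟩, ?_⟩
      have hv : U2 0 + ⟪-e0, (0:En 2) - 0⟫ + ‖(0:En 2) - 0‖ ^ 2 = 0 := by
        simp [U2]
      rw [hv]
      have : Ef (0 : En 2) = 0 := by
        rw [Ef, if_pos hx0]
        simp
      rw [this] at hw
      exact hw
    · obtain ⟨hr, hc⟩ := mem_reach hx0 hx hxz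
      refine ⟨U2 x + ⟪-(‖x‖⁻¹ • x), x - x⟫ + ‖x - x‖ ^ 2,
        ⟨x, hc, _, hr, rfl⟩, ?_⟩
      have hv : U2 x + ⟪-(‖x‖⁻¹ • x), x - x⟫ + ‖x - x‖ ^ 2 = -‖x‖ := by
        rw [sub_self]
        simp [U2]
      rw [hv]
      rw [Ef, if_pos hx0] at hw
      exact hw
  · push_neg at hx0
    rw [Ef, if_neg (not_le.mpr hx0)] at hw
    by_cases hx1 : x 1 = 0
    · set δ := w - (-|x 1| + (x 0)^2) with hδ
      have hδpos : 0 < δ := by rw [hδ]; linarith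
      set s := min (1/2 : ℝ) (Real.sqrt δ / 2) with hs
      have hs0 : 0 < s := by
        apply lt_min (by norm_num)
        have := Real.sqrt_pos.mpr hδpos
        linarith
      have hs1 : s < 1 := lt_of_le_of_lt (min_le_left _ _) (by norm_num)
      have hssq : s ^ 2 < δ := by
        have h1 : s ≤ Real.sqrt δ / 2 := min_le_right _ _
        have h2 : s ^ 2 ≤ (Real.sqrt δ / 2) ^ 2 := by nlinarith
        have h3 : (Real.sqrt δ / 2) ^ 2 = δ / 4 := by
          rw [div_pow, Real.sq_sqrt hδpos.le]
          norm_num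
        nlinarith
      set y : En 2 := EuclideanSpace.single 1 s with hy
      have hy0 : (0:ℝ) ≤ y 0 := by simp [hy, EuclideanSpace.single_apply]
      have hn : ‖y‖ = s := by
        rw [hy, EuclideanSpace.norm_single, Real.norm_eq_abs, abs_of_pos hs0]
      have hyn : y ≠ 0 := by
        intro h
        rw [h, norm_zero] at hn
        exact absurd hn.symm (ne_of_gt hs0)
      obtain ⟨hr, hc⟩ := mem_reach hy0 (by rw [hn]; exact hs1) hyn
      refine ⟨_, ⟨y, hc, _, hr, rfl⟩, ?_⟩
      rw [hy, val_single x s]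
      rw [abs_of_pos hs0, hx1]
      have : -s - s⁻¹ * s * (0 - s) + (x 0 ^ 2 + (0 - s) ^ 2)
          = x 0 ^ 2 + s ^ 2 := by
        field_simp
        ring
      rw [this]
      have : -|x 1| + (x 0)^2 = x 0 ^ 2 := by rw [hx1]; simp
      rw [this] at hδ
      nlinarith
    · set y : En 2 := EuclideanSpace.single 1 (x 1) with hy
      have hy0 : (0:ℝ) ≤ y 0 := by simp [hy, EuclideanSpace.single_apply]
      have hn : ‖y‖ = |x 1| := by
        rw [hy, EuclideanSpace.norm_single, Real.norm_eq_abs]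
      have hx1' : 0 < |x 1| := abs_pos.mpr hx1
      have hyn : y ≠ 0 := by
        intro h
        rw [h, norm_zero] at hn
        exact absurd hn.symm (ne_of_gt hx1')
      have hnlt : ‖y‖ < 1 := by
        rw [hn]
        exact lt_of_le_of_lt (abs_coord_le x 1) hx
      obtain ⟨hr, hc⟩ := mem_reach hy0 hnlt hyn
      refine ⟨_, ⟨y, hc, _, hr, rfl⟩, ?_⟩
      rw [hy, val_single x (x 1)]
      have : -|x 1| - |x 1|⁻¹ * x 1 * (x 1 - x 1) + (x 0 ^ 2 + (x 1 - x 1) ^ 2)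
          = -|x 1| + x 0 ^ 2 := by ring
      rw [this]
      exact hw

lemma semiconc : ∀ x ∈ ball (0:En 2) 1, ∀ y ∈ ball (0:En 2) 1,
    segment ℝ x y ⊆ ball (0:En 2) 1 → ∀ t ∈ Set.Icc (0:ℝ) 1,
    t * Ef x + (1 - t) * Ef y - Ef (t • x + (1 - t) • y) ≤
      1 * t * (1 - t) * ‖x - y‖ ^ ((1:ℝ) + (1:ℝ)) := by
  intro x hx y hy _ t ht
  obtain ⟨ht0, ht1⟩ := ht
  set z : En 2 := t • x + (1 - t) • y with hzdef
  have hz : z ∈ ball (0:En 2) 1 :=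
    (convex_ball (0:En 2) 1) hx hy ht0 (by linarith) (by ring)
  have hrp : ‖x - y‖ ^ ((1:ℝ) + (1:ℝ)) = ‖x - y‖ ^ (2:ℕ) := by
    rw [show ((1:ℝ) + (1:ℝ)) = ((2:ℕ):ℝ) by norm_num, Real.rpow_natCast]
  rw [hrp, one_mul]
  rw [main_sInf z (mem_ball_zero_iff.mp hz)]
  have hkey : t * Ef x + (1 - t) * Ef y - t * (1 - t) * ‖x - y‖ ^ 2 ≤
      sInf (Sset z) := by
    apply le_csInf (Sset_nonempty z)
    rintro v ⟨y', hy', p, hp, rfl⟩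
    have h1 : Ef x ≤ U2 y' + ⟪p, x - y'⟫ + ‖x - y'‖ ^ 2 :=
      lowbd x _ ⟨y', hy', p, hp, rfl⟩
    have h2 : Ef y ≤ U2 y' + ⟪p, y - y'⟫ + ‖y - y'‖ ^ 2 :=
      lowbd y _ ⟨y', hy', p, hp, rfl⟩
    have hzy : z - y' = t • (x - y') + (1 - t) • (y - y') := by
      rw [hzdef]
      module
    have hid : ⟪p, z - y'⟫ = t * ⟪p, x - y'⟫ + (1 - t) * ⟪p, y - y'⟫ := by
      rw [hzy, inner_add_right, real_inner_smul_right, real_inner_smul_right]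
    have hsq : t * ‖x - y'‖ ^ 2 + (1 - t) * ‖y - y'‖ ^ 2 - ‖z - y'‖ ^ 2
        = t * (1 - t) * ‖x - y‖ ^ 2 := by
      rw [hzy]
      have := combo_sq (x - y') (y - y') t
      rwa [sub_sub_sub_cancel_right] at this
    have h3 : t * Ef x ≤ t * (U2 y' + ⟪p, x - y'⟫ + ‖x - y'‖ ^ 2) :=
      mul_le_mul_of_nonneg_left h1 ht0
    have h4 : (1 - t) * Ef y ≤ (1 - t) * (U2 y' + ⟪p, y - y'⟫ + ‖y - y'‖ ^ 2) :=
      mul_le_mul_of_nonneg_left h2 (by linarith)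
    nlinarith [h3, h4, hid, hsq]
  linarith

theorem stmt15 (Ω : Set (En 2)) (hΩ : Ω = {x : En 2 | 0 < x 0 ∧ ‖x‖ < 1})
    (u : En 2 → ℝ) (hu : u = fun x => -‖x‖)
    (E : En 2 → ℝ)
    (hE : E = fun x => if 0 ≤ x 0 then -‖x‖ else -|x 1| + (x 0) ^ 2) :
    (∀ x ∈ ball (0 : En 2) 1, E x =
      sInf {v | ∃ y ∈ closure Ω, ∃ p ∈ reachGrad Ω u y,
        v = u y + ⟪p, x - y⟫ + ‖x - y‖ ^ 2}) ∧
    (∃ C, SemiconcaveOn (ball (0 : En 2) 1) 1 C E) ∧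
    (∀ x ∈ closure Ω ∩ ball (0 : En 2) 1, E x = u x) ∧
    ¬ ConcaveOn ℝ (ball (0 : En 2) 1) E := by
  have h1 : Ω = Om2 := hΩ
  have h2 : u = U2 := hu
  have h3 : E = Ef := hE
  subst h1 h2 h3
  refine ⟨?_, ⟨1, ?_⟩, ?_, ?_⟩
  · intro x hx
    exact main_sInf x (mem_ball_zero_iff.mp hx)
  · intro x hx y hy hseg t ht
    exact semiconc x hx y hy hseg t ht
  · rintro x ⟨hc, _⟩
    have h0 : 0 ≤ x 0 := closure_sub hc
    show Ef x = U2 x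
    rw [Ef, if_pos h0]
    rfl
  · intro hcon
    set a : En 2 := EuclideanSpace.single 0 (-1/2 : ℝ) with hadef
    have ha0 : a 0 = -1/2 := by simp [hadef, EuclideanSpace.single_apply]
    have ha1 : a 1 = 0 := by simp [hadef, EuclideanSpace.single_apply]
    have hamem : a ∈ ball (0 : En 2) 1 := by
      rw [mem_ball_zero_iff, hadef, EuclideanSpace.norm_single, Real.norm_eq_abs,
        abs_lt]
      constructor <;> norm_num
    have hbmem : (0 : En 2) ∈ ball (0 : En 2) 1 := by
      rw [mem_ball_zero_iff, norm_zero]; norm_num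
    have key := hcon.2 hamem hbmem (by norm_num : (0:ℝ) ≤ 1/2)
      (by norm_num : (0:ℝ) ≤ 1/2) (by norm_num)
    set m : En 2 := (1/2 : ℝ) • a + (1/2 : ℝ) • (0 : En 2) with hmdef
    have hm0 : m 0 = -1/4 := by
      have : m 0 = (1/2 : ℝ) * a 0 + (1/2 : ℝ) * (0 : En 2) 0 := rfl
      rw [this, ha0]
      norm_num
    have hm1 : m 1 = 0 := by
      have : m 1 = (1/2 : ℝ) * a 1 + (1/2 : ℝ) * (0 : En 2) 1 := rfl
      rw [this, ha1]
      norm_num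
    have hEa : Ef a = 1/4 := by
      rw [Ef, if_neg (by rw [ha0]; norm_num), ha0, ha1]
      norm_num
    have hEb : Ef (0 : En 2) = 0 := by
      have h00 : (0 : En 2) 0 = 0 := rfl
      rw [Ef, h00, if_pos le_rfl]
      simp
    have hEm : Ef m = 1/16 := by
      rw [Ef, if_neg (by rw [hm0]; norm_num), hm0, hm1]
      norm_num
    rw [hEa, hEb, hEm, smul_eq_mul, smul_eq_mul] at key
    norm_num at key
end

section
/- Let Ω ⊂ ℝ² be an open set contained in {x₁ > 0} and containing {x : x₁ > 0, |x| < 1}, and let u(x) = −√(x₁⁴ + x₂²) on closure(Ω). Then D*u(0) = {0} × [−1,1]; in particular co D*u(0) \ D*u(0) = ∅. -/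
set_option maxHeartbeats 1000000

open scoped RealInnerProductSpace
open Metric Filter

noncomputable def vec2 (a b : ℝ) : En 2 := (WithLp.equiv 2 (Fin 2 → ℝ)).symm ![a, b]

@[simp] lemma vec2_0 (a b : ℝ) : vec2 a b 0 = a := rfl
@[simp] lemma vec2_1 (a b : ℝ) : vec2 a b 1 = b := rfl

noncomputable def uu (x : En 2) : ℝ := -Real.sqrt ((x 0) ^ 4 + (x 1) ^ 2)

lemma grad_uu {x : En 2} (hq : (x 0) ^ 4 + (x 1) ^ 2 ≠ 0) :
    HasGradientAt uu
      (vec2 (-(2 * (x 0) ^ 3 / Real.sqrt ((x 0) ^ 4 + (x 1) ^ 2)))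
            (-(x 1 / Real.sqrt ((x 0) ^ 4 + (x 1) ^ 2)))) x := by
  set s := Real.sqrt ((x 0) ^ 4 + (x 1) ^ 2) with hs
  have hp0 : HasFDerivAt (fun y : En 2 => y 0) (EuclideanSpace.proj (0 : Fin 2) : En 2 →L[ℝ] ℝ) x :=
    by simpa using (EuclideanSpace.proj (0 : Fin 2) : En 2 →L[ℝ] ℝ).hasFDerivAt (x := x)
  have hp1 : HasFDerivAt (fun y : En 2 => y 1) (EuclideanSpace.proj (1 : Fin 2) : En 2 →L[ℝ] ℝ) x :=
    by simpa using (EuclideanSpace.proj (1 : Fin 2) : En 2 →L[ℝ] ℝ).hasFDerivAt (x := x)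
  have h4 : HasFDerivAt (fun y : En 2 => (y 0) ^ 4)
      (((4 : ℝ) * (x 0) ^ 3) • (EuclideanSpace.proj (0 : Fin 2) : En 2 →L[ℝ] ℝ)) x := by
    simpa [Function.comp_def] using (hasDerivAt_pow 4 (x 0)).comp_hasFDerivAt x hp0
  have h2 : HasFDerivAt (fun y : En 2 => (y 1) ^ 2)
      (((2 : ℝ) * (x 1)) • (EuclideanSpace.proj (1 : Fin 2) : En 2 →L[ℝ] ℝ)) x := by
    simpa [Function.comp_def] using (hasDerivAt_pow 2 (x 1)).comp_hasFDerivAt x hp1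
  have hsum := h4.add h2
  have hsq := (Real.hasDerivAt_sqrt hq).comp_hasFDerivAt x hsum
  have := hsq.neg
  rw [hasGradientAt_iff_hasFDerivAt]
  refine HasFDerivAt.congr_fderiv (by exact this) ?_
  ext v
  have hspos : 0 < s := Real.sqrt_pos.2 (lt_of_le_of_ne (by positivity) (Ne.symm hq))
  simp [InnerProductSpace.toDual_apply_apply, PiLp.inner_apply, Fin.sum_univ_two,
    Function.comp]
  field_simp
  ring

lemma bound1 {a s : ℝ} (ha : 0 < a) (hs : a ^ 2 ≤ s) : |(-(2 * a ^ 3 / s))| ≤ 2 * a := by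
  have hs0 : 0 < s := lt_of_lt_of_le (by positivity) hs
  rw [abs_neg, abs_of_nonneg (by positivity)]
  rw [div_le_iff₀ hs0]
  nlinarith

lemma sq_le_sqrt_q (a b : ℝ) : a ^ 2 ≤ Real.sqrt (a ^ 4 + b ^ 2) := by
  rw [show a ^ 4 + b ^ 2 = (a ^ 2) ^ 2 + b ^ 2 by ring]
  calc a ^ 2 ≤ |a ^ 2| := le_abs_self _
    _ = Real.sqrt ((a ^ 2) ^ 2) := (Real.sqrt_sq_eq_abs _).symm
    _ ≤ _ := Real.sqrt_le_sqrt (by nlinarith [sq_nonneg b])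

lemma tendsto_vec2 {f g : ℕ → ℝ} {a b : ℝ} (hf : Tendsto f atTop (nhds a))
    (hg : Tendsto g atTop (nhds b)) :
    Tendsto (fun k => vec2 (f k) (g k)) atTop (nhds (vec2 a b)) := by
  have h : Tendsto (fun k => ![f k, g k]) atTop (nhds ![a, b]) := by
    rw [tendsto_pi_nhds]; intro i; fin_cases i <;> simpa
  have := ((EuclideanSpace.equiv (Fin 2) ℝ).symm.continuous.tendsto _).comp h
  exact this

lemma tendsto_coord {xs : ℕ → En 2} {x : En 2} (h : Tendsto xs atTop (nhds x)) (i : Fin 2) :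
    Tendsto (fun k => xs k i) atTop (nhds (x i)) := by
  have := ((EuclideanSpace.proj i : En 2 →L[ℝ] ℝ).continuous.tendsto x).comp h
  exact this

theorem stmt16 {Ω : Set (En 2)} (hΩ : IsOpen Ω)
    (hsub : Ω ⊆ {x : En 2 | 0 < x 0})
    (hsup : {x : En 2 | 0 < x 0 ∧ ‖x‖ < 1} ⊆ Ω) :
    reachGrad Ω (fun x => -Real.sqrt ((x 0) ^ 4 + (x 1) ^ 2)) 0
        = {p : En 2 | p 0 = 0 ∧ p 1 ∈ Set.Icc (-1 : ℝ) 1} ∧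
      convexHull ℝ (reachGrad Ω (fun x => -Real.sqrt ((x 0) ^ 4 + (x 1) ^ 2)) 0)
          \ reachGrad Ω (fun x => -Real.sqrt ((x 0) ^ 4 + (x 1) ^ 2)) 0 = ∅ := by
  have hUU : (fun x : En 2 => -Real.sqrt ((x 0) ^ 4 + (x 1) ^ 2)) = uu := rfl
  rw [hUU]
  have hset : reachGrad Ω uu 0 = {p : En 2 | p 0 = 0 ∧ p 1 ∈ Set.Icc (-1 : ℝ) 1} := by
    apply Set.Subset.antisymm
    · rintro p ⟨xs, hk, hx0, hgp⟩
      have hpos : ∀ k, 0 < xs k 0 := fun k => hsub (hk k).1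
      have hqpos : ∀ k, (0:ℝ) < (xs k 0) ^ 4 + (xs k 1) ^ 2 := fun k => by
        have := hpos k; positivity
      have hgrad : ∀ k, gradient uu (xs k)
          = vec2 (-(2 * (xs k 0) ^ 3 / Real.sqrt ((xs k 0) ^ 4 + (xs k 1) ^ 2)))
                 (-(xs k 1 / Real.sqrt ((xs k 0) ^ 4 + (xs k 1) ^ 2))) :=
        fun k => (grad_uu (hqpos k).ne').gradient
      have hx00 : Tendsto (fun k => xs k 0) atTop (nhds 0) := by
        simpa using tendsto_coord hx0 0
      have hg0 : Tendsto (fun k => gradient uu (xs k) 0) atTop (nhds (p 0)) :=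
        tendsto_coord hgp 0
      have hg1 : Tendsto (fun k => gradient uu (xs k) 1) atTop (nhds (p 1)) :=
        tendsto_coord hgp 1
      constructor
      · have hb : ∀ k, ‖gradient uu (xs k) 0‖ ≤ 2 * xs k 0 := fun k => by
          rw [hgrad k, vec2_0, Real.norm_eq_abs]
          exact bound1 (hpos k) (sq_le_sqrt_q _ _)
        have h2x : Tendsto (fun k => 2 * xs k 0) atTop (nhds 0) := by
          simpa using hx00.const_mul 2
        exact tendsto_nhds_unique hg0 (squeeze_zero_norm hb h2x)
      · have hmem : ∀ k, gradient uu (xs k) 1 ∈ Set.Icc (-1:ℝ) 1 := fun k => by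
          rw [hgrad k, vec2_1, Set.mem_Icc, ← abs_le, abs_neg, abs_div,
            abs_of_pos (Real.sqrt_pos.2 (hqpos k))]
          rw [div_le_one (Real.sqrt_pos.2 (hqpos k))]
          calc |xs k 1| = Real.sqrt ((xs k 1) ^ 2) := (Real.sqrt_sq_eq_abs _).symm
            _ ≤ _ := Real.sqrt_le_sqrt (by nlinarith [pow_pos (hpos k) 4])
        exact isClosed_Icc.mem_of_tendsto hg1 (Eventually.of_forall hmem)
    · rintro p ⟨hp0, hp1⟩
      set σ := p 1 with hσdef
      have hσ2 : σ ^ 2 ≤ 1 := by nlinarith [hp1.1, hp1.2]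
      set t : ℕ → ℝ := fun k => 1 / ((k:ℝ) + 3) with htdef
      have ht0 : ∀ k, 0 < t k := fun k => by positivity
      have ht3 : ∀ k, t k ≤ 1/3 := fun k => by
        rw [htdef]
        rw [div_le_div_iff₀ (by positivity) (by norm_num)]
        have : (0:ℝ) ≤ (k:ℝ) := Nat.cast_nonneg k
        linarith
      have htlim : Tendsto t atTop (nhds 0) := by
        have h1 : Tendsto (fun k : ℕ => ((k:ℝ) + 3)) atTop atTop :=
          tendsto_atTop_add_const_right _ 3 tendsto_natCast_atTop_atTop
        have h2 := h1.inv_tendsto_atTop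
        simpa [htdef, one_div, Pi.inv_def] using h2
      set a : ℕ → ℝ := fun k => (t k) ^ 2 * (1 - σ ^ 2) + (t k) ^ 3 with hadef
      have haeq : ∀ k, a k = (t k) ^ 2 * (1 - σ ^ 2) + (t k) ^ 3 := fun k => rfl
      have hapos : ∀ k, 0 < a k := fun k => by
        have h1 := ht0 k
        rw [haeq k]
        nlinarith [mul_nonneg (sq_nonneg (t k)) (sub_nonneg.2 hσ2), pow_pos h1 3]
      have halim : Tendsto a atTop (nhds 0) := by
        have : Tendsto (fun k => (t k) ^ 2 * (1 - σ ^ 2) + (t k) ^ 3) atTop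
            (nhds (0 ^ 2 * (1 - σ ^ 2) + 0 ^ 3)) :=
          ((htlim.pow 2).mul_const _).add (htlim.pow 3)
        simpa using this
      set xs : ℕ → En 2 := fun k => vec2 (Real.sqrt (Real.sqrt (a k))) (-(σ * t k)) with hxsdef
      have hx0pos : ∀ k, 0 < xs k 0 := fun k => by
        simp only [hxsdef, vec2_0]
        exact Real.sqrt_pos.2 (Real.sqrt_pos.2 (hapos k))
      have hx04 : ∀ k, (xs k 0) ^ 4 = a k := fun k => by
        simp only [hxsdef, vec2_0]
        rw [show (4:ℕ) = 2 * 2 from rfl, pow_mul,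
          Real.sq_sqrt (Real.sqrt_nonneg _), Real.sq_sqrt (hapos k).le]
      have hx02 : ∀ k, (xs k 0) ^ 2 = Real.sqrt (a k) := fun k => by
        simp only [hxsdef, vec2_0]
        rw [Real.sq_sqrt (Real.sqrt_nonneg _)]
      have hqeq : ∀ k, (xs k 0) ^ 4 + (xs k 1) ^ 2 = (t k) ^ 2 * (1 + t k) := fun k => by
        rw [hx04 k]
        simp only [hxsdef, vec2_1, hadef]
        ring
      have hqpos : ∀ k, (0:ℝ) < (xs k 0) ^ 4 + (xs k 1) ^ 2 := fun k => by
        rw [hqeq k]; have := ht0 k; nlinarith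
      have hsqrtq : ∀ k, Real.sqrt ((xs k 0) ^ 4 + (xs k 1) ^ 2)
          = t k * Real.sqrt (1 + t k) := fun k => by
        rw [hqeq k, Real.sqrt_mul (sq_nonneg _), Real.sqrt_sq (ht0 k).le]
      -- membership in Ω
      have hmem : ∀ k, xs k ∈ Ω := fun k => by
        apply hsup
        refine ⟨hx0pos k, ?_⟩
        have hnorm : ‖xs k‖ = Real.sqrt ((xs k 0) ^ 2 + (xs k 1) ^ 2) := by
          rw [EuclideanSpace.norm_eq, Fin.sum_univ_two]
          simp [sq_abs]
        rw [hnorm, Real.sqrt_lt' one_pos]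
        have h1 := ht0 k
        have h3 := ht3 k
        have hA : a k ≤ 2 * (t k) ^ 2 := by rw [haeq k]; nlinarith [sq_nonneg σ]
        have hB : Real.sqrt (a k) ≤ Real.sqrt 2 * t k := by
          calc Real.sqrt (a k) ≤ Real.sqrt (2 * (t k) ^ 2) := Real.sqrt_le_sqrt hA
            _ = Real.sqrt 2 * t k := by
                rw [Real.sqrt_mul (by norm_num), Real.sqrt_sq h1.le]
        have hs2 : Real.sqrt 2 < 1.5 := by
          nlinarith [Real.sq_sqrt (show (0:ℝ) ≤ 2 by norm_num), Real.sqrt_nonneg 2]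
        have hx12 : (xs k 1) ^ 2 ≤ (t k) ^ 2 := by
          simp only [hxsdef, vec2_1]
          nlinarith
        rw [hx02 k]
        nlinarith [Real.sqrt_nonneg (a k)]
      refine ⟨xs, fun k => ⟨hmem k, (hasGradientAt_iff_hasFDerivAt.1
        (grad_uu (hqpos k).ne')).differentiableAt⟩, ?_, ?_⟩
      · have h1lim : Tendsto (fun k => Real.sqrt (Real.sqrt (a k))) atTop (nhds 0) := by
          have hc : Continuous fun r : ℝ => Real.sqrt (Real.sqrt r) :=
            Real.continuous_sqrt.comp Real.continuous_sqrt
          have := (hc.tendsto 0).comp halim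
          simpa [Function.comp_def] using this
        have h2lim : Tendsto (fun k => -(σ * t k)) atTop (nhds 0) := by
          have h := (htlim.const_mul σ).neg
          rw [mul_zero, neg_zero] at h
          exact h
        have := tendsto_vec2 h1lim h2lim
        have hz : vec2 0 0 = (0 : En 2) := by
          ext i; fin_cases i <;> rfl
        rwa [hz] at this
      · have hgrad : ∀ k, gradient uu (xs k)
            = vec2 (-(2 * (xs k 0) ^ 3 / Real.sqrt ((xs k 0) ^ 4 + (xs k 1) ^ 2)))
                   (-(xs k 1 / Real.sqrt ((xs k 0) ^ 4 + (xs k 1) ^ 2))) :=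
          fun k => (grad_uu (hqpos k).ne').gradient
        have h1lim : Tendsto
            (fun k => -(2 * (xs k 0) ^ 3 / Real.sqrt ((xs k 0) ^ 4 + (xs k 1) ^ 2)))
            atTop (nhds 0) := by
          have hb : ∀ k, ‖-(2 * (xs k 0) ^ 3 / Real.sqrt ((xs k 0) ^ 4 + (xs k 1) ^ 2))‖
              ≤ 2 * xs k 0 := fun k => by
            rw [Real.norm_eq_abs]
            exact bound1 (hx0pos k) (sq_le_sqrt_q _ _)
          have hc : Continuous fun r : ℝ => Real.sqrt (Real.sqrt r) :=
            Real.continuous_sqrt.comp Real.continuous_sqrt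
          have h0 : Tendsto (fun k => xs k 0) atTop (nhds 0) := by
            have := (hc.tendsto 0).comp halim
            simpa [hxsdef, Function.comp_def] using this
          have h2x : Tendsto (fun k => 2 * xs k 0) atTop (nhds 0) := by
            have := h0.const_mul 2
            rwa [mul_zero] at this
          exact squeeze_zero_norm hb h2x
        have h2eq : ∀ k, -(xs k 1 / Real.sqrt ((xs k 0) ^ 4 + (xs k 1) ^ 2))
            = σ / Real.sqrt (1 + t k) := fun k => by
          rw [hsqrtq k]
          simp only [hxsdef, vec2_1]
          have h1 : t k ≠ 0 := (ht0 k).ne'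
          have h2 : Real.sqrt (1 + t k) ≠ 0 := by
            have := ht0 k
            positivity
          field_simp
        have h2lim : Tendsto
            (fun k => -(xs k 1 / Real.sqrt ((xs k 0) ^ 4 + (xs k 1) ^ 2)))
            atTop (nhds σ) := by
          simp only [h2eq]
          have hder : Tendsto (fun k => Real.sqrt (1 + t k)) atTop (nhds 1) := by
            have hadd : Tendsto (fun k => 1 + t k) atTop (nhds 1) := by
              have := htlim.const_add 1
              rwa [add_zero] at this
            have h2 := (Real.continuous_sqrt.tendsto 1).comp hadd
            rw [Real.sqrt_one] at h2
            exact h2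
          have := (tendsto_const_nhds (x := σ) (f := atTop)).div hder one_ne_zero
          simpa [Pi.div_def] using this
        have := tendsto_vec2 h1lim h2lim
        have hz : vec2 0 σ = p := by
          ext i; fin_cases i
          · exact hp0.symm
          · rfl
        simp only [hgrad]
        rwa [hz] at this
  refine ⟨hset, ?_⟩
  rw [hset]
  have hconv : Convex ℝ {p : En 2 | p 0 = 0 ∧ p 1 ∈ Set.Icc (-1 : ℝ) 1} := by
    intro x hx y hy α β hα hβ hαβ
    refine ⟨?_, ?_⟩
    · have h : (α • x + β • y) 0 = α * x 0 + β * y 0 := rfl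
      rw [h, hx.1, hy.1]; ring
    · have h : (α • x + β • y) 1 = α * x 1 + β * y 1 := rfl
      rw [h]
      exact (convex_Icc (-1:ℝ) 1) hx.2 hy.2 hα hβ hαβ
  rw [hconv.convexHull_eq, Set.diff_self]
end
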